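/- Let G be a group satisfying (H1) and let A be a basal subgroup of G. Then A ≤ R(A) ≤ N_G(A), where R(A) is the rigid normalizer of A. -/

import Mathlib

variable {G : Type*} [Group G]

/-- The conjugate `B ^ g = g⁻¹ * B * g` of a subgroup `B` by an element `g`. -/
def conjBy (B : Subgroup G) (g : G) : Subgroup G :=
  B.map (MulAut.conj g⁻¹).toMonoidHom

/-- A subgroup is virtually solvable if it has a solvable subgroup of finite index. -/
def VirtSolvable (H : Subgroup G) : Prop :=
  ∃ M : Subgroup G, M ≤ H ∧ M.relIndex H ≠ 0 ∧ IsSolvable ↥M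

/-- A subgroup is virtually nilpotent if it has a nilpotent subgroup of finite index. -/
def VirtNilpotent (H : Subgroup G) : Prop :=
  ∃ M : Subgroup G, M ≤ H ∧ M.relIndex H ≠ 0 ∧ Group.IsNilpotent ↥M

/-- Hypothesis (H1): every virtually solvable subgroup whose normalizer has finite index
(i.e. belonging to `L(G)`) is trivial. -/
def HypH1 (G : Type*) [Group G] : Prop :=
  ∀ H : Subgroup G, (Subgroup.normalizer (H : Set G)).FiniteIndex → VirtSolvable H → H = ⊥

/-- Hypothesis (H2): every nontrivial normal subgroup of `G` contains the derived subgroup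
of some finite-index subgroup of `G`. -/
def HypH2 (G : Type*) [Group G] : Prop :=
  ∀ N : Subgroup G, N.Normal → N ≠ ⊥ →
    ∃ G₀ : Subgroup G, G₀.FiniteIndex ∧ ⁅G₀, G₀⁆ ≤ N

/-- `VA K H` means `K ≤va H`: `K ≤ H` and `K` contains the derived subgroup of some
finite-index subgroup of `H`. -/
def VA (K H : Subgroup G) : Prop :=
  K ≤ H ∧ ∃ A : Subgroup G, A ≤ H ∧ A.relIndex H ≠ 0 ∧ ⁅A, A⁆ ≤ K

/-- A subgroup `B` is basal if its normalizer has finite index and every conjugate of `B`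
either equals `B` or meets `B` trivially. -/
def IsBasal (B : Subgroup G) : Prop :=
  (Subgroup.normalizer (B : Set G)).FiniteIndex ∧ ∀ g : G, conjBy B g = B ∨ conjBy B g ⊓ B = ⊥

/-- The rigid normalizer `R(A)` of a basal subgroup `A`: the intersection of the
normalizers of all basal subgroups meeting `A` trivially. -/
def rigidNormalizer (A : Subgroup G) : Subgroup G :=
  ⨅ B ∈ {B : Subgroup G | IsBasal B ∧ A ⊓ B = ⊥}, Subgroup.normalizer (B : Set G)

/-! ### Auxiliary lemmas -/

lemma mem_conjBy {B : Subgroup G} {g x : G} : x ∈ conjBy B g ↔ g * x * g⁻¹ ∈ B := by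
  simp only [conjBy, Subgroup.mem_map, MulEquiv.coe_toMonoidHom, MulAut.conj_apply]
  constructor
  · rintro ⟨b, hb, rfl⟩
    have h : g * (g⁻¹ * b * g⁻¹⁻¹) * g⁻¹ = b := by group
    rwa [h]
  · intro h
    exact ⟨g * x * g⁻¹, h, by group⟩

lemma conjBy_inf (P Q : Subgroup G) (g : G) :
    conjBy (P ⊓ Q) g = conjBy P g ⊓ conjBy Q g := by
  ext x
  simp [mem_conjBy, Subgroup.mem_inf]

lemma conjBy_bot (g : G) : conjBy (⊥ : Subgroup G) g = ⊥ := by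
  ext x
  simp only [mem_conjBy, Subgroup.mem_bot]
  constructor
  · intro h
    have hx : x = g⁻¹ * (g * x * g⁻¹) * g := by group
    rw [hx, h]; group
  · rintro rfl; group

lemma conjBy_conjBy (B : Subgroup G) (g h : G) :
    conjBy (conjBy B g) h = conjBy B (g * h) := by
  ext x
  rw [mem_conjBy, mem_conjBy, mem_conjBy]
  have : g * (h * x * h⁻¹) * g⁻¹ = g * h * x * (g * h)⁻¹ := by group
  rw [this]

lemma conjBy_self {A : Subgroup G} {a : G} (ha : a ∈ A) : conjBy A a = A := by
  ext x
  rw [mem_conjBy]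
  constructor
  · intro h
    have h2 := A.mul_mem (A.mul_mem (A.inv_mem ha) h) ha
    have he : a⁻¹ * (a * x * a⁻¹) * a = x := by group
    rwa [he] at h2
  · intro h
    exact A.mul_mem (A.mul_mem ha h) (A.inv_mem ha)

lemma mem_normalizer_of_conjBy_eq {A : Subgroup G} {x : G} (h : conjBy A x = A) :
    x ∈ (Subgroup.normalizer (A : Set G)) := by
  rw [Subgroup.mem_normalizer_iff]
  intro n
  rw [← mem_conjBy (B := A) (g := x), h]

lemma conjBy_eq_of_mem_normalizer {A : Subgroup G} {x : G} (h : x ∈ (Subgroup.normalizer (A : Set G))) :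
    conjBy A x = A := by
  ext n
  rw [mem_conjBy]
  exact (Subgroup.mem_normalizer_iff.mp h n).symm

lemma normalizer_conjBy (A : Subgroup G) (g : G) :
    (Subgroup.normalizer ((conjBy A g) : Set G)) = conjBy (Subgroup.normalizer (A : Set G)) g := by
  ext n
  rw [mem_conjBy, Subgroup.mem_normalizer_iff, Subgroup.mem_normalizer_iff]
  constructor
  · intro H h
    have H' := H (g⁻¹ * h * g)
    rw [mem_conjBy, mem_conjBy] at H'
    have e1 : g * (g⁻¹ * h * g) * g⁻¹ = h := by group
    have e2 : g * (n * (g⁻¹ * h * g) * n⁻¹) * g⁻¹ =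
        (g * n * g⁻¹) * h * (g * n * g⁻¹)⁻¹ := by group
    rwa [e1, e2] at H'
  · intro H h
    rw [mem_conjBy, mem_conjBy]
    have H' := H (g * h * g⁻¹)
    have e2 : (g * n * g⁻¹) * (g * h * g⁻¹) * (g * n * g⁻¹)⁻¹ =
        g * (n * h * n⁻¹) * g⁻¹ := by group
    rwa [e2] at H'

lemma index_conjBy (H : Subgroup G) (g : G) : (conjBy H g).index = H.index := by
  rw [conjBy, Subgroup.map_equiv_eq_comap_symm']
  exact Subgroup.index_comap_of_surjective _ (MulAut.conj g⁻¹).symm.surjective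

lemma isBasal_conjBy {A : Subgroup G} (hA : IsBasal A) (x : G) : IsBasal (conjBy A x) := by
  constructor
  · refine ⟨?_⟩
    rw [normalizer_conjBy, index_conjBy]
    exact hA.1.index_ne_zero
  · intro g
    rcases hA.2 (x * g * x⁻¹) with h | h
    · left
      have := congrArg (fun K => conjBy K x) h
      rw [conjBy_conjBy] at this
      have e : x * g * x⁻¹ * x = x * g := by group
      rw [e] at this
      rw [conjBy_conjBy, this]
    · right
      have := congrArg (fun K => conjBy K x) h
      rw [conjBy_inf, conjBy_conjBy, conjBy_bot] at this
      have e : x * g * x⁻¹ * x = x * g := by group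
      rw [e] at this
      rw [conjBy_conjBy, this]

/-- Two elements of trivially-intersecting subgroups, each normalizing the other's
subgroup, commute. -/
lemma comm_of_disjoint {P Q : Subgroup G} (hPQ : P ⊓ Q = ⊥) {x y : G}
    (hx : x ∈ P) (hy : y ∈ Q) (hxQ : x ∈ (Subgroup.normalizer (Q : Set G))) (hyP : y ∈ (Subgroup.normalizer (P : Set G))) :
    x * y = y * x := by
  have h1 : x⁻¹ * y⁻¹ * x * y ∈ P := by
    have hy' : y⁻¹ ∈ (Subgroup.normalizer (P : Set G)) := (Subgroup.normalizer (P : Set G)).inv_mem hyP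
    have hm : y⁻¹ * x * y⁻¹⁻¹ ∈ P := (Subgroup.mem_normalizer_iff.mp hy' x).mp hx
    have hm2 := P.mul_mem (P.inv_mem hx) hm
    have e : x⁻¹ * (y⁻¹ * x * y⁻¹⁻¹) = x⁻¹ * y⁻¹ * x * y := by group
    rwa [e] at hm2
  have h2 : x⁻¹ * y⁻¹ * x * y ∈ Q := by
    have hx' : x⁻¹ ∈ (Subgroup.normalizer (Q : Set G)) := (Subgroup.normalizer (Q : Set G)).inv_mem hxQ
    have hm : x⁻¹ * y⁻¹ * x⁻¹⁻¹ ∈ Q := (Subgroup.mem_normalizer_iff.mp hx' y⁻¹).mp (Q.inv_mem hy)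
    have hm2 := Q.mul_mem hm hy
    have e : x⁻¹ * y⁻¹ * x⁻¹⁻¹ * y = x⁻¹ * y⁻¹ * x * y := by group
    rwa [e] at hm2
  have hb : x⁻¹ * y⁻¹ * x * y ∈ P ⊓ Q := ⟨h1, h2⟩
  rw [hPQ, Subgroup.mem_bot] at hb
  have h4 : y⁻¹ * x * y = x * (x⁻¹ * y⁻¹ * x * y) := by group
  rw [hb, mul_one] at h4
  calc x * y = y * (y⁻¹ * x * y) := by group
    _ = y * x := by rw [h4]

/-- The key lemma: under (H1), every element of a subgroup `A` with finite-index
normalizer normalizes each basal subgroup `B` meeting `A` trivially. -/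
lemma conjBy_eq_of_basal (hH1 : HypH1 G) {A B : Subgroup G}
    (hAfin : (Subgroup.normalizer (A : Set G)).FiniteIndex) (hB : IsBasal B) (hAB : A ⊓ B = ⊥)
    {a : G} (ha : a ∈ A) : conjBy B a = B := by
  by_contra hne
  have hdisj : conjBy B a ⊓ B = ⊥ := (hB.2 a).resolve_left hne
  haveI : (Subgroup.normalizer (A : Set G)).FiniteIndex := hAfin
  haveI : (Subgroup.normalizer (B : Set G)).FiniteIndex := hB.1
  set Y : Subgroup G := conjBy B a with hYdef
  set N : Subgroup G := (Subgroup.normalizer (A : Set G)).normalCore ⊓ (Subgroup.normalizer (B : Set G)).normalCore with hNdef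
  haveI hNnormal : N.Normal := by
    constructor
    intro n hn g
    exact ⟨(Subgroup.normalCore_normal _).conj_mem _ hn.1 g,
      (Subgroup.normalCore_normal _).conj_mem _ hn.2 g⟩
  haveI hNfin : N.FiniteIndex := by
    rw [hNdef]
    infer_instance
  have hNA : N ≤ (Subgroup.normalizer (A : Set G)) := le_trans inf_le_left (Subgroup.normalCore_le _)
  have hNB : N ≤ (Subgroup.normalizer (B : Set G)) := le_trans inf_le_right (Subgroup.normalCore_le _)
  have hNY : N ≤ (Subgroup.normalizer (Y : Set G)) := by
    intro x hx
    rw [Subgroup.mem_normalizer_iff]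
    intro n
    rw [hYdef, mem_conjBy, mem_conjBy]
    have hz : a * x * a⁻¹ ∈ (Subgroup.normalizer (B : Set G)) :=
      Subgroup.normalCore_le _ ((Subgroup.normalCore_normal _).conj_mem _ hx.2 a)
    have h := Subgroup.mem_normalizer_iff.mp hz (a * n * a⁻¹)
    have e : (a * x * a⁻¹) * (a * n * a⁻¹) * (a * x * a⁻¹)⁻¹ = a * (x * n * x⁻¹) * a⁻¹ := by
      group
    rwa [e] at h
  have hAY : A ⊓ Y = ⊥ := by
    rw [hYdef, ← conjBy_self ha, ← conjBy_inf, hAB, conjBy_bot]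
  have hYB : Y ⊓ B = ⊥ := hdisj
  -- The finite-index piece N ⊓ B of B is abelian.
  have key : ∀ v1 ∈ N ⊓ B, ∀ v2 ∈ N ⊓ B, v1 * v2 = v2 * v1 := by
    rintro v1 ⟨hv1N, hv1B⟩ v2 ⟨hv2N, hv2B⟩
    set y1 : G := a⁻¹ * v1 * a with hy1def
    set y2 : G := a⁻¹ * v2 * a with hy2def
    have hy1Y : y1 ∈ Y := by
      rw [hYdef, mem_conjBy]
      have e : a * (a⁻¹ * v1 * a) * a⁻¹ = v1 := by group
      rwa [e]
    have hy2Y : y2 ∈ Y := by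
      rw [hYdef, mem_conjBy]
      have e : a * (a⁻¹ * v2 * a) * a⁻¹ = v2 := by group
      rwa [e]
    have hy1N : y1 ∈ N := by
      have := hNnormal.conj_mem v1 hv1N a⁻¹
      rwa [inv_inv] at this
    have hy2N : y2 ∈ N := by
      have := hNnormal.conj_mem v2 hv2N a⁻¹
      rwa [inv_inv] at this
    set c1 : G := v1⁻¹ * y1 with hc1def
    set c2 : G := v2⁻¹ * y2 with hc2def
    have hcA : ∀ v y : G, v ∈ N → y = a⁻¹ * v * a → v⁻¹ * y ∈ A := by
      intro v y hvN hy
      have hv' : v⁻¹ ∈ (Subgroup.normalizer (A : Set G)) := (Subgroup.normalizer (A : Set G)).inv_mem (hNA hvN)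
      have hm : v⁻¹ * a⁻¹ * v⁻¹⁻¹ ∈ A := (Subgroup.mem_normalizer_iff.mp hv' a⁻¹).mp (A.inv_mem ha)
      have hm2 := A.mul_mem hm ha
      have e : v⁻¹ * a⁻¹ * v⁻¹⁻¹ * a = v⁻¹ * (a⁻¹ * v * a) := by group
      rw [e] at hm2
      rwa [hy]
    have hc1A : c1 ∈ A := hcA v1 y1 hv1N hy1def
    have hc2A : c2 ∈ A := hcA v2 y2 hv2N hy2def
    have hc1N : c1 ∈ N := N.mul_mem (N.inv_mem hv1N) hy1N
    have hc2N : c2 ∈ N := N.mul_mem (N.inv_mem hv2N) hy2N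
    -- commutation relations
    have hyv : ∀ y v : G, y ∈ Y → y ∈ N → v ∈ B → v ∈ N → y * v = v * y := by
      intro y v hyY hyN hvB hvN
      exact comm_of_disjoint hYB hyY hvB (hNB hyN) (hNY hvN)
    have h11 : y1 * v2 = v2 * y1 := hyv y1 v2 hy1Y hy1N hv2B hv2N
    have h22 : y2 * v1 = v1 * y2 := hyv y2 v1 hy2Y hy2N hv1B hv1N
    have hc1y2 : c1 * y2 = y2 * c1 :=
      comm_of_disjoint hAY hc1A hy2Y (hNY hc1N) (hNA hy2N)
    have hc1v2 : c1 * v2 = v2 * c1 :=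
      comm_of_disjoint hAB hc1A hv2B (hNB hc1N) (hNA hv2N)
    -- c1 commutes with c2 = v2⁻¹ * y2
    have hcc : c1 * c2 = c2 * c1 := by
      have hC1 : Commute c1 v2 := hc1v2
      have hC2 : Commute c1 y2 := hc1y2
      have : Commute c1 (v2⁻¹ * y2) := (hC1.inv_right).mul_right hC2
      exact this
    -- expand
    have hCy1v2 : Commute y1 v2 := h11
    have hCy2v1 : Commute y2 v1 := h22
    have e1 : c1 * c2 = v1⁻¹ * v2⁻¹ * (y1 * y2) := by
      have h12 : y1 * v2⁻¹ = v2⁻¹ * y1 := hCy1v2.inv_right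
      calc c1 * c2 = v1⁻¹ * (y1 * v2⁻¹) * y2 := by rw [hc1def, hc2def]; group
        _ = v1⁻¹ * (v2⁻¹ * y1) * y2 := by rw [h12]
        _ = v1⁻¹ * v2⁻¹ * (y1 * y2) := by group
    have e2 : c2 * c1 = v2⁻¹ * v1⁻¹ * (y2 * y1) := by
      have h21 : y2 * v1⁻¹ = v1⁻¹ * y2 := hCy2v1.inv_right
      calc c2 * c1 = v2⁻¹ * (y2 * v1⁻¹) * y1 := by rw [hc1def, hc2def]; group
        _ = v2⁻¹ * (v1⁻¹ * y2) * y1 := by rw [h21]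
        _ = v2⁻¹ * v1⁻¹ * (y2 * y1) := by group
    have heq : v1⁻¹ * v2⁻¹ * (y1 * y2) = v2⁻¹ * v1⁻¹ * (y2 * y1) := by
      rw [← e1, ← e2, hcc]
    have hdY : v1 * v2 * v1⁻¹ * v2⁻¹ = y2 * y1 * (y1 * y2)⁻¹ := by
      calc v1 * v2 * v1⁻¹ * v2⁻¹
          = v1 * v2 * (v1⁻¹ * v2⁻¹ * (y1 * y2)) * (y1 * y2)⁻¹ := by group
        _ = v1 * v2 * (v2⁻¹ * v1⁻¹ * (y2 * y1)) * (y1 * y2)⁻¹ := by rw [heq]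
        _ = y2 * y1 * (y1 * y2)⁻¹ := by group
    have hdB : v1 * v2 * v1⁻¹ * v2⁻¹ ∈ B :=
      B.mul_mem (B.mul_mem (B.mul_mem hv1B hv2B) (B.inv_mem hv1B)) (B.inv_mem hv2B)
    have hdYmem : v1 * v2 * v1⁻¹ * v2⁻¹ ∈ Y := by
      rw [hdY]
      exact Y.mul_mem (Y.mul_mem hy2Y hy1Y) (Y.inv_mem (Y.mul_mem hy1Y hy2Y))
    have hd1 : v1 * v2 * v1⁻¹ * v2⁻¹ = 1 := by
      have : v1 * v2 * v1⁻¹ * v2⁻¹ ∈ Y ⊓ B := ⟨hdYmem, hdB⟩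
      rwa [hYB, Subgroup.mem_bot] at this
    have : v1 * v2 = (v1 * v2 * v1⁻¹ * v2⁻¹) * (v2 * v1) := by group
    rw [hd1, one_mul] at this
    exact this
  -- Hence B is virtually solvable, so B = ⊥ by (H1), a contradiction.
  have hsolv : IsSolvable ↥(N ⊓ B) := by
    apply isSolvable_of_comm
    intro x y
    have := key x.1 x.2 y.1 y.2
    exact Subtype.ext this
  have hrel : (N ⊓ B).relIndex B ≠ 0 := by
    rw [Subgroup.inf_relIndex_right]
    intro h0
    have hdvd := Subgroup.relIndex_dvd_index_of_normal N B
    rw [h0] at hdvd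
    exact hNfin.index_ne_zero (Nat.eq_zero_of_zero_dvd hdvd)
  have hBbot : B = ⊥ := hH1 B hB.1 ⟨N ⊓ B, inf_le_right, hrel, hsolv⟩
  apply hne
  rw [hYdef, hBbot, conjBy_bot]

theorem statement12 (hH1 : HypH1 G) (A : Subgroup G) (hA : IsBasal A) :
    A ≤ rigidNormalizer A ∧ rigidNormalizer A ≤ Subgroup.normalizer (A : Set G) := by
  constructor
  · -- A ≤ R(A)
    refine le_iInf fun B => le_iInf fun hB => ?_
    intro a ha
    exact mem_normalizer_of_conjBy_eq (conjBy_eq_of_basal hH1 hA.1 hB.1 hB.2 ha)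
  · -- R(A) ≤ N(A)
    intro x hx
    rcases hA.2 x with h | h
    · exact mem_normalizer_of_conjBy_eq h
    · -- conjBy A x is a basal subgroup meeting A trivially, so x normalizes it
      have hmem : IsBasal (conjBy A x) ∧ A ⊓ conjBy A x = ⊥ := by
        refine ⟨isBasal_conjBy hA x, ?_⟩
        rw [inf_comm]
        exact h
      have hx' : x ∈ (Subgroup.normalizer ((conjBy A x) : Set G)) := by
        have := Subgroup.mem_iInf.mp hx (conjBy A x)
        exact Subgroup.mem_iInf.mp this hmem
      -- but x normalizing conjBy A x forces x ∈ N(A)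
      rw [Subgroup.mem_normalizer_iff]
      intro n
      have H := Subgroup.mem_normalizer_iff.mp hx' (x⁻¹ * n * x)
      rw [mem_conjBy, mem_conjBy] at H
      have e1 : x * (x⁻¹ * n * x) * x⁻¹ = n := by group
      rwa [e1] at H
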